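/- Let F be a filter and P a prime filter containing F in a residuated lattice. Then P is an F-minimal prime filter if and only if P = D_F(P), where D_F(P) = {a ∈ A | (F : a) ⊄ P}; and this holds if and only if for each x ∈ A, P contains exactly one of x or (F : x). -/
import Mathlib


universe u

class ResiduatedLattice (A : Type u) extends Lattice A, BoundedOrder A where
  mul : A → A → A
  himp : A → A → A
  mul_comm : ∀ x y : A, mul x y = mul y x
  mul_assoc : ∀ x y z : A, mul (mul x y) z = mul x (mul y z)
  mul_top : ∀ x : A, mul x ⊤ = x
  adjoint : ∀ x y z : A, mul x y ≤ z ↔ x ≤ himp y z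

namespace RL

variable {A : Type u} [ResiduatedLattice A]

/-- A filter: a nonempty subset closed under the monoid operation `⊙` and closed
under joins with arbitrary elements. -/
def IsFilter (F : Set A) : Prop :=
  F.Nonempty ∧ (∀ x ∈ F, ∀ y ∈ F, ResiduatedLattice.mul x y ∈ F) ∧
    (∀ x ∈ F, ∀ y : A, x ⊔ y ∈ F)

/-- A prime filter: a proper filter such that `x ⊔ y ∈ P` implies `x ∈ P` or `y ∈ P`. -/
def IsPrime (P : Set A) : Prop :=
  IsFilter P ∧ P ≠ Set.univ ∧ ∀ x y : A, x ⊔ y ∈ P → x ∈ P ∨ y ∈ P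

/-- The filter generated by a subset `X`. -/
def Fgen (X : Set A) : Set A := ⋂₀ {G : Set A | IsFilter G ∧ X ⊆ G}

/-- An `X`-minimal prime filter: a minimal element of the set of prime filters containing `X`. -/
def MinPrimeOver (X : Set A) (P : Set A) : Prop :=
  IsPrime P ∧ X ⊆ P ∧ ∀ Q : Set A, IsPrime Q → X ⊆ Q → Q ⊆ P → Q = P

/-- A minimal prime filter. -/
def MinPrime (P : Set A) : Prop :=
  IsPrime P ∧ ∀ Q : Set A, IsPrime Q → Q ⊆ P → Q = P

/-- The coannihilator of `X` belonging to `F`. -/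
def coann (F : Set A) (X : Set A) : Set A := {a : A | ∀ x ∈ X, x ⊔ a ∈ F}

/-- `X^⊥ = {a | x ⊔ a = ⊤ for all x ∈ X}`. -/
def perp (X : Set A) : Set A := {a : A | ∀ x ∈ X, x ⊔ a = ⊤}

/-- `D_F(P) = {a | (F : a) ⊄ P}`. -/
def DF (F P : Set A) : Set A := {a : A | ¬ coann F {a} ⊆ P}

/-- A `∨`-closed subset: nonempty and closed under joins. -/
def VClosed (C : Set A) : Prop := C.Nonempty ∧ ∀ x ∈ C, ∀ y ∈ C, x ⊔ y ∈ C

end RL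

namespace RLAux

open RL

variable {A : Type u} [ResiduatedLattice A]

local notation:70 x " ⬝ " y => ResiduatedLattice.mul x y

lemma mul_mono_l {x x' : A} (y : A) (h : x ≤ x') : (x ⬝ y) ≤ (x' ⬝ y) :=
  (ResiduatedLattice.adjoint x y (x' ⬝ y)).mpr
    (h.trans ((ResiduatedLattice.adjoint x' y (x' ⬝ y)).mp le_rfl))

lemma mul_mono_r (x : A) {y y' : A} (h : y ≤ y') : (x ⬝ y) ≤ (x ⬝ y') := by
  rw [ResiduatedLattice.mul_comm x y, ResiduatedLattice.mul_comm x y']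
  exact mul_mono_l x h

lemma mul_le_l (x y : A) : (x ⬝ y) ≤ x := by
  have := mul_mono_r x (le_top : y ≤ ⊤)
  rwa [ResiduatedLattice.mul_top] at this

lemma mul_le_r (x y : A) : (x ⬝ y) ≤ y := by
  rw [ResiduatedLattice.mul_comm]; exact mul_le_l y x

lemma mul_sup (x y z : A) : ((x ⊔ y) ⬝ z) = (x ⬝ z) ⊔ (y ⬝ z) := by
  apply le_antisymm
  · refine (ResiduatedLattice.adjoint _ _ _).mpr (sup_le ?_ ?_)
    · exact (ResiduatedLattice.adjoint _ _ _).mp le_sup_left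
    · exact (ResiduatedLattice.adjoint _ _ _).mp le_sup_right
  · exact sup_le (mul_mono_l z le_sup_left) (mul_mono_l z le_sup_right)

lemma sup_mul (x y z : A) : (x ⬝ (y ⊔ z)) = (x ⬝ y) ⊔ (x ⬝ z) := by
  rw [ResiduatedLattice.mul_comm x (y ⊔ z), mul_sup,
    ResiduatedLattice.mul_comm y x, ResiduatedLattice.mul_comm z x]

/-- Powers with respect to `⊙`. -/
def pw (a : A) : ℕ → A
  | 0 => ⊤
  | n + 1 => a ⬝ pw a n

lemma pw_add (a : A) (n m : ℕ) : pw a (n + m) = (pw a n ⬝ pw a m) := by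
  induction n with
  | zero =>
      rw [Nat.zero_add]
      show pw a m = ((⊤ : A) ⬝ pw a m)
      rw [ResiduatedLattice.mul_comm, ResiduatedLattice.mul_top]
  | succ n ih =>
      rw [Nat.succ_add]
      show (a ⬝ pw a (n + m)) = ((a ⬝ pw a n) ⬝ pw a m)
      rw [ih, ResiduatedLattice.mul_assoc]

lemma filt_up {F : Set A} (hF : IsFilter F) {x y : A} (hx : x ∈ F) (h : x ≤ y) : y ∈ F := by
  have := hF.2.2 x hx y
  rwa [sup_eq_right.mpr h] at this

lemma filt_top {F : Set A} (hF : IsFilter F) : (⊤ : A) ∈ F := by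
  obtain ⟨x, hx⟩ := hF.1
  exact filt_up hF hx le_top

lemma pw_mem {F : Set A} (hF : IsFilter F) {a : A} (ha : a ∈ F) (n : ℕ) : pw a n ∈ F := by
  induction n with
  | zero => exact filt_top hF
  | succ n ih => exact hF.2.1 a ha _ ih

/-- Binomial-type inequality: `(a ⊔ b)^(n+m) ≤ a^n ⊔ b^m`. -/
lemma pw_sup_le (a b : A) : ∀ k n m : ℕ, n + m = k → pw (a ⊔ b) k ≤ pw a n ⊔ pw b m := by
  intro k
  induction k with
  | zero =>
      intro n m h
      obtain ⟨rfl, rfl⟩ : n = 0 ∧ m = 0 := by omega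
      exact le_sup_left
  | succ k ih =>
      intro n m h
      match n, m with
      | 0, m => exact le_trans le_top le_sup_left
      | n + 1, 0 => exact le_trans le_top le_sup_right
      | n + 1, m + 1 =>
        have h1 : n + (m + 1) = k := by omega
        have h2 : (n + 1) + m = k := by omega
        have e1 : pw (a ⊔ b) (k + 1) = (a ⬝ pw (a ⊔ b) k) ⊔ (b ⬝ pw (a ⊔ b) k) := by
          show ((a ⊔ b) ⬝ pw (a ⊔ b) k) = _
          rw [mul_sup]
        rw [e1]
        apply sup_le
        · have : (a ⬝ pw (a ⊔ b) k) ≤ (a ⬝ (pw a n ⊔ pw b (m + 1))) :=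
            mul_mono_r a (ih n (m + 1) h1)
          rw [sup_mul] at this
          refine this.trans (sup_le ?_ ?_)
          · exact le_sup_left
          · exact (mul_le_r a (pw b (m + 1))).trans le_sup_right
        · have : (b ⬝ pw (a ⊔ b) k) ≤ (b ⬝ (pw a (n + 1) ⊔ pw b m)) :=
            mul_mono_r b (ih (n + 1) m h2)
          rw [sup_mul] at this
          refine this.trans (sup_le ?_ ?_)
          · exact (mul_le_r b (pw a (n + 1))).trans le_sup_left
          · exact le_sup_right

/-- The filter generated by a filter `Q` together with an element `a`. -/
def ext (Q : Set A) (a : A) : Set A := {z | ∃ q ∈ Q, ∃ n : ℕ, (q ⬝ pw a n) ≤ z}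

lemma subset_ext {Q : Set A} (a : A) : Q ⊆ ext Q a := by
  intro q hq
  exact ⟨q, hq, 0, by rw [show pw a 0 = (⊤ : A) from rfl, ResiduatedLattice.mul_top]⟩

lemma mem_ext_self {Q : Set A} (hQ : IsFilter Q) (a : A) : a ∈ ext Q a := by
  obtain ⟨q, hq⟩ := hQ.1
  refine ⟨q, hq, 1, ?_⟩
  have e : pw a 1 = a := by
    show (a ⬝ (⊤ : A)) = a
    exact ResiduatedLattice.mul_top a
  rw [e]
  exact mul_le_r q a

lemma ext_filter {Q : Set A} (hQ : IsFilter Q) (a : A) : IsFilter (ext Q a) := by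
  refine ⟨⟨a, mem_ext_self hQ a⟩, ?_, ?_⟩
  · rintro x ⟨q₁, hq₁, n, hn⟩ y ⟨q₂, hq₂, m, hm⟩
    refine ⟨(q₁ ⬝ q₂), hQ.2.1 q₁ hq₁ q₂ hq₂, n + m, ?_⟩
    have e : ((q₁ ⬝ q₂) ⬝ pw a (n + m)) = ((q₁ ⬝ pw a n) ⬝ (q₂ ⬝ pw a m)) := by
      rw [pw_add, ResiduatedLattice.mul_assoc, ResiduatedLattice.mul_assoc]
      congr 1
      rw [← ResiduatedLattice.mul_assoc, ← ResiduatedLattice.mul_assoc,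
        ResiduatedLattice.mul_comm q₂ (pw a n)]
    rw [e]
    exact le_trans (mul_mono_l _ hn) (mul_mono_r _ hm)
  · rintro x ⟨q, hq, n, hn⟩ y
    exact ⟨q, hq, n, hn.trans le_sup_left⟩

lemma ext_inter {Q : Set A} (hQ : IsFilter Q) {a b z : A} (hab : a ⊔ b ∈ Q)
    (h1 : z ∈ ext Q a) (h2 : z ∈ ext Q b) : z ∈ Q := by
  obtain ⟨q₁, hq₁, n, hn⟩ := h1
  obtain ⟨q₂, hq₂, m, hm⟩ := h2
  have key : ((q₁ ⬝ q₂) ⬝ pw (a ⊔ b) (n + m)) ≤ z := by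
    have h3 : ((q₁ ⬝ q₂) ⬝ pw (a ⊔ b) (n + m)) ≤ ((q₁ ⬝ q₂) ⬝ (pw a n ⊔ pw b m)) :=
      mul_mono_r _ (pw_sup_le a b (n + m) n m rfl)
    rw [sup_mul] at h3
    refine h3.trans (sup_le ?_ ?_)
    · exact le_trans (mul_mono_l _ (mul_le_l q₁ q₂)) hn
    · exact le_trans (mul_mono_l _ (mul_le_r q₁ q₂)) hm
  have hmem : ((q₁ ⬝ q₂) ⬝ pw (a ⊔ b) (n + m)) ∈ Q :=
    hQ.2.1 _ (hQ.2.1 q₁ hq₁ q₂ hq₂) _ (pw_mem hQ hab (n + m))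
  exact filt_up hQ hmem key

/-- Prime filter separation: a filter disjoint from a `∨`-closed set extends to a
prime filter still disjoint from it. -/
lemma separation (F C : Set A) (hF : IsFilter F) (hC : VClosed C)
    (hd : ∀ z ∈ F, z ∉ C) :
    ∃ Q : Set A, IsPrime Q ∧ F ⊆ Q ∧ ∀ z ∈ Q, z ∉ C := by
  set S : Set (Set A) := {G | IsFilter G ∧ F ⊆ G ∧ ∀ z ∈ G, z ∉ C} with hS
  obtain ⟨Q, hFQ, hQmax⟩ :
      ∃ Q, F ⊆ Q ∧ Maximal (· ∈ S) Q := by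
    apply zorn_subset_nonempty
    · intro c hcS hchain hcne
      refine ⟨⋃₀ c, ⟨⟨?_, ?_, ?_⟩, ?_, ?_⟩, fun s hs => Set.subset_sUnion_of_mem hs⟩
      · obtain ⟨G, hG⟩ := hcne
        obtain ⟨x, hx⟩ := (hcS hG).1.1
        exact ⟨x, G, hG, hx⟩
      · rintro x ⟨G, hG, hxG⟩ y ⟨G', hG', hyG'⟩
        rcases hchain.total hG hG' with h | h
        · exact ⟨G', hG', (hcS hG').1.2.1 x (h hxG) y hyG'⟩
        · exact ⟨G, hG, (hcS hG).1.2.1 x hxG y (h hyG')⟩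
      · rintro x ⟨G, hG, hxG⟩ y
        exact ⟨G, hG, (hcS hG).1.2.2 x hxG y⟩
      · obtain ⟨G, hG⟩ := hcne
        exact (hcS hG).2.1.trans (Set.subset_sUnion_of_mem hG)
      · rintro z ⟨G, hG, hzG⟩
        exact (hcS hG).2.2 z hzG
    · exact ⟨hF, subset_rfl, hd⟩
  obtain ⟨hQfilt, hFQ', hQC⟩ := hQmax.prop
  refine ⟨Q, ⟨hQfilt, ?_, ?_⟩, hFQ', hQC⟩
  · intro h
    obtain ⟨c, hc⟩ := hC.1
    exact hQC c (h ▸ Set.mem_univ c) hc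
  · intro a b hab
    by_contra hcontra
    push_neg at hcontra
    obtain ⟨ha, hb⟩ := hcontra
    -- the extensions by a and by b both meet C
    have hextmeet : ∀ x : A, x ∉ Q → ∃ c ∈ C, c ∈ ext Q x := by
      intro x hx
      by_contra h
      push_neg at h
      have hmem : ext Q x ∈ S :=
        ⟨ext_filter hQfilt x, hFQ'.trans (subset_ext x), fun z hz hzC => h z hzC hz⟩
      have := hQmax.2 hmem (subset_ext x)
      exact hx (this (mem_ext_self hQfilt x))
    obtain ⟨c₁, hc₁C, hc₁⟩ := hextmeet a ha
    obtain ⟨c₂, hc₂C, hc₂⟩ := hextmeet b hb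
    have hsupC : c₁ ⊔ c₂ ∈ C := hC.2 c₁ hc₁C c₂ hc₂C
    have h1 : c₁ ⊔ c₂ ∈ ext Q a := (ext_filter hQfilt a).2.2 c₁ hc₁ c₂
    have h2 : c₁ ⊔ c₂ ∈ ext Q b := by
      have := (ext_filter hQfilt b).2.2 c₂ hc₂ c₁
      rwa [sup_comm] at this
    exact hQC _ (ext_inter hQfilt hab h1 h2) hsupC

end RLAux

theorem minimal_prime_characterization {A : Type u} [ResiduatedLattice A] (F P : Set A)
    (hF : RL.IsFilter F) (hP : RL.IsPrime P) (hFP : F ⊆ P) :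
    (RL.MinPrimeOver F P ↔ P = RL.DF F P) ∧
    (RL.MinPrimeOver F P ↔ ∀ x : A, Xor' (x ∈ P) (RL.coann F {x} ⊆ P)) := by
  have hproper : P ≠ Set.univ := hP.2.1
  -- coann membership unfolds
  have hco : ∀ x a : A, a ∈ RL.coann F {x} ↔ x ⊔ a ∈ F := by
    intro x a
    constructor
    · intro h; exact h x rfl
    · intro h y hy; rw [Set.mem_singleton_iff] at hy; rw [hy]; exact h
  -- D_F(P) ⊆ P always
  have hDFsub : RL.DF F P ⊆ P := by
    intro a ha
    simp only [RL.DF, Set.mem_setOf_eq, Set.not_subset] at ha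
    obtain ⟨b, hb, hbP⟩ := ha
    have : a ⊔ b ∈ P := hFP ((hco a b).mp hb)
    rcases hP.2.2 a b this with h | h
    · exact h
    · exact absurd h hbP
  have main : RL.MinPrimeOver F P ↔ P = RL.DF F P := by
    constructor
    · intro hmin
      refine le_antisymm ?_ hDFsub
      intro x hx
      by_contra hxD
      simp only [RL.DF, Set.mem_setOf_eq, not_not] at hxD
      -- so coann F {x} ⊆ P; build a ∨-closed set avoiding F
      have hxF : x ∉ F := by
        intro hxF
        apply hproper
        apply Set.eq_univ_of_univ_subset
        intro a _
        refine hxD ?_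
        rw [hco]
        exact hF.2.2 x hxF a
      set C : Set A := {z | z ∉ P ∨ ∃ c, (c ∉ P ∨ c = ⊥) ∧ z = c ⊔ x} with hCdef
      have hxC : x ∈ C := Or.inr ⟨⊥, Or.inr rfl, (bot_sup_eq x).symm⟩
      have hnP : ∀ c d : A, (c ∉ P ∨ c = ⊥) → (d ∉ P ∨ d = ⊥) → (c ⊔ d ∉ P ∨ c ⊔ d = ⊥) := by
        rintro c d (hc | rfl) (hd | rfl)
        · refine Or.inl fun h => ?_
          rcases hP.2.2 c d h with h' | h'
          · exact hc h'
          · exact hd h'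
        · rw [sup_bot_eq]; exact Or.inl hc
        · rw [bot_sup_eq]; exact Or.inl hd
        · rw [sup_bot_eq]; exact Or.inr rfl
      have hnP' : ∀ u d : A, u ∉ P → (d ∉ P ∨ d = ⊥) → u ⊔ d ∉ P := by
        rintro u d hu (hd | rfl)
        · intro h
          rcases hP.2.2 u d h with h' | h'
          · exact hu h'
          · exact hd h'
        · rwa [sup_bot_eq]
      have hCv : RL.VClosed C := by
        constructor
        · exact ⟨x, hxC⟩
        · rintro u (hu | ⟨c, hc, rfl⟩) v (hv | ⟨d, hd, rfl⟩)
          · refine Or.inl fun h => ?_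
            rcases hP.2.2 u v h with h' | h'
            · exact hu h'
            · exact hv h'
          · refine Or.inr ⟨u ⊔ d, Or.inl (hnP' u d hu hd), ?_⟩
            rw [sup_assoc]
          · refine Or.inr ⟨v ⊔ c, Or.inl (hnP' v c hv hc), ?_⟩
            rw [sup_comm (c ⊔ x) v, ← sup_assoc]
          · refine Or.inr ⟨c ⊔ d, hnP c d hc hd, ?_⟩
            rw [sup_assoc c x (d ⊔ x), sup_comm x (d ⊔ x), sup_assoc d x x,
              sup_idem, ← sup_assoc]
      have hdisj : ∀ z ∈ F, z ∉ C := by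
        rintro z hz (hzP | ⟨c, hc | rfl, rfl⟩)
        · exact hzP (hFP hz)
        · apply hc
          apply hxD
          rw [hco]
          rwa [sup_comm]
        · rw [bot_sup_eq] at hz
          exact hxF hz
      obtain ⟨Q, hQprime, hFQ, hQC⟩ := RLAux.separation F C hF hCv hdisj
      have hQP : Q ⊆ P := by
        intro q hq
        by_contra hqP
        exact hQC q hq (Or.inl hqP)
      have := hmin.2.2 Q hQprime hFQ hQP
      rw [this] at hQC
      exact hQC x hx hxC
    · intro hPD
      refine ⟨hP, hFP, ?_⟩
      intro Q hQ hFQ hQP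
      refine le_antisymm hQP ?_
      intro x hx
      have hxD : x ∈ RL.DF F P := hPD ▸ hx
      rw [RL.DF, Set.mem_setOf_eq, Set.not_subset] at hxD
      obtain ⟨b, hb, hbP⟩ := hxD
      have hxb : x ⊔ b ∈ Q := hFQ ((hco x b).mp hb)
      rcases hQ.2.2 x b hxb with h | h
      · exact h
      · exact absurd (hQP h) hbP
  refine ⟨main, main.trans ?_⟩
  constructor
  · intro hPD x
    have hx : x ∈ P ↔ x ∈ RL.DF F P := by rw [← hPD]
    rw [RL.DF, Set.mem_setOf_eq] at hx
    by_cases h : x ∈ P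
    · exact Or.inl ⟨h, hx.mp h⟩
    · exact Or.inr ⟨not_not.mp (fun hc => h (hx.mpr hc)), h⟩
  · intro hxor
    apply Set.eq_of_subset_of_subset
    · intro x hx
      rcases hxor x with ⟨_, h⟩ | ⟨_, h⟩
      · exact h
      · exact absurd hx h
    · intro x hx
      rw [RL.DF, Set.mem_setOf_eq] at hx
      rcases hxor x with ⟨h, _⟩ | ⟨h, _⟩
      · exact h
      · exact absurd h hx
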